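/- Let Π be a strongly order-preserving, fiber-compact skew-product semiflow on X₊ × Y over the minimal base flow, with every forward orbit precompact and uniformly stable, and suppose every nonempty compact subset of X₊ has a greatest lower bound in X. Let A be the union of all 1-covers of Y for Π. Then A is totally ordered with respect to <: if c₁ and c₂ are distinct 1-covers of Y, then either c₁(y) < c₂(y) for every y ∈ Y, or c₂(y) < c₁(y) for every y ∈ Y; in particular each fiber A(y) = A ∩ P⁻¹(y) is totally ordered. -/

import Mathlib

open Set Filter Topology

section SkewProductFramework

variable {X Y : Type*} [NormedAddCommGroup X] [NormedSpace ℝ X]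
  [MetricSpace Y] [CompactSpace Y]

/-- A continuous flow on `Y`. -/
structure IsFlow (σ : ℝ → Y → Y) : Prop where
  cont : Continuous fun p : ℝ × Y => σ p.1 p.2
  map_zero : ∀ y, σ 0 y = y
  map_add : ∀ s t : ℝ, ∀ y, σ (s + t) y = σ s (σ t y)

/-- The flow on `Y` is minimal: no nonempty compact invariant subset other than `Y`. -/
def IsMinimalFlow (σ : ℝ → Y → Y) : Prop :=
  ∀ S : Set Y, S.Nonempty → IsCompact S → (∀ t, σ t '' S = S) → S = univ

/-- `Xp` is a closed (pointed, convex) positive cone in `X`. -/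
structure IsClosedCone (Xp : Set X) : Prop where
  closed : IsClosed Xp
  zero_mem : (0 : X) ∈ Xp
  add_mem : ∀ a ∈ Xp, ∀ b ∈ Xp, a + b ∈ Xp
  smul_mem : ∀ c : ℝ, 0 ≤ c → ∀ x ∈ Xp, c • x ∈ Xp
  eq_zero : ∀ x ∈ Xp, -x ∈ Xp → x = 0

/-- Order induced by the cone: `a ≤ b` iff `b - a ∈ Xp`. -/
def coneLE (Xp : Set X) (a b : X) : Prop := b - a ∈ Xp

/-- Strict order induced by the cone. -/
def coneLT (Xp : Set X) (a b : X) : Prop := coneLE Xp a b ∧ a ≠ b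

/-- `U < V` for sets: every element of `U` is strictly below every element of `V`. -/
def setLT (Xp : Set X) (U V : Set X) : Prop := ∀ a ∈ U, ∀ b ∈ V, coneLT Xp a b

/-- A skew-product semiflow `Π_t(x,y) = (u t x y, σ t y)` on `Xp × Y`. -/
structure IsSkewProduct (Xp : Set X) (σ : ℝ → Y → Y) (u : ℝ → X → Y → X) : Prop where
  cont : ContinuousOn (fun p : ℝ × X × Y => u p.1 p.2.1 p.2.2)
    (Ici (0 : ℝ) ×ˢ Xp ×ˢ (univ : Set Y))
  mem : ∀ t ≥ (0:ℝ), ∀ x ∈ Xp, ∀ y : Y, u t x y ∈ Xp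
  map_zero : ∀ x ∈ Xp, ∀ y : Y, u 0 x y = x
  map_add : ∀ t ≥ (0:ℝ), ∀ s ≥ (0:ℝ), ∀ x ∈ Xp, ∀ y : Y,
    u (t + s) x y = u t (u s x y) (σ s y)

/-- Forward orbit `O⁺(x,y)`. -/
def fwdOrbit (σ : ℝ → Y → Y) (u : ℝ → X → Y → X) (x : X) (y : Y) : Set (X × Y) :=
  {p | ∃ t ≥ (0:ℝ), p = (u t x y, σ t y)}

/-- Omega-limit set `ω(x,y)`. -/
def omegaSet (σ : ℝ → Y → Y) (u : ℝ → X → Y → X) (x : X) (y : Y) : Set (X × Y) :=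
  {p | ∃ tn : ℕ → ℝ, Tendsto tn atTop atTop ∧
        Tendsto (fun k => (u (tn k) x y, σ (tn k) y)) atTop (𝓝 p)}

/-- Uniform stability of the forward orbit `O⁺(x₀,y₀)`. -/
def IsUnifStable (Xp : Set X) (u : ℝ → X → Y → X) (x₀ : X) (y₀ : Y) : Prop :=
  ∀ ε > (0:ℝ), ∃ δ > (0:ℝ), ∀ x ∈ Xp, ∀ s ≥ (0:ℝ),
    ‖u s x₀ y₀ - u s x y₀‖ ≤ δ →
      ∀ t ≥ (0:ℝ), ‖u (t + s) x₀ y₀ - u (t + s) x y₀‖ < ε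

/-- Monotonicity of the skew-product semiflow. -/
def IsMonotoneSP (Xp : Set X) (u : ℝ → X → Y → X) : Prop :=
  ∀ t ≥ (0:ℝ), ∀ y : Y, ∀ x₁ ∈ Xp, ∀ x₂ ∈ Xp,
    coneLE Xp x₁ x₂ → coneLE Xp (u t x₁ y) (u t x₂ y)

/-- Strongly order-preserving skew-product semiflow. -/
def IsSOP (Xp : Set X) (u : ℝ → X → Y → X) : Prop :=
  IsMonotoneSP Xp u ∧
  ∃ t₀ > (0:ℝ), ∀ y : Y, ∀ x₁ ∈ Xp, ∀ x₂ ∈ Xp, coneLT Xp x₁ x₂ →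
    ∃ U V : Set X, IsOpen U ∧ IsOpen V ∧ x₁ ∈ U ∧ x₂ ∈ V ∧
      ∀ t ≥ t₀, setLT Xp ((fun x => u t x y) '' (U ∩ Xp)) ((fun x => u t x y) '' (V ∩ Xp))

/-- Fiber-compactness. -/
def IsFiberCompact (Xp : Set X) (u : ℝ → X → Y → X) : Prop :=
  ∃ tb > (0:ℝ), ∀ y : Y, ∀ B ⊆ Xp, Bornology.IsBounded B →
    ∀ t > tb, IsCompact (closure ((fun x => u t x y) '' B))

/-- A 1-cover of `Y`, described by its graph map `c : Y → X`. -/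
def IsOneCoverMap (Xp : Set X) (σ : ℝ → Y → Y) (u : ℝ → X → Y → X) (c : Y → X) : Prop :=
  Continuous c ∧ (∀ y, c y ∈ Xp) ∧ ∀ t ≥ (0:ℝ), ∀ y, u t (c y) y = c (σ t y)

/-- A compact positively invariant set that is a 1-cover of `Y`. -/
def IsOneCoverSet (Xp : Set X) (σ : ℝ → Y → Y) (u : ℝ → X → Y → X)
    (K : Set (X × Y)) : Prop :=
  IsCompact K ∧ (∀ p ∈ K, p.1 ∈ Xp) ∧
  (∀ t ≥ (0:ℝ), ∀ p ∈ K, (u t p.1 p.2, σ t p.2) ∈ K) ∧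
  ∀ y : Y, ∃! x : X, (x, y) ∈ K

/-- `Φ` is a (two-sided) flow extension of the semiflow on `K`. -/
def IsFlowExtension (σ : ℝ → Y → Y) (u : ℝ → X → Y → X) (K : Set (X × Y))
    (Φ : ℝ → X × Y → X × Y) : Prop :=
  ContinuousOn (fun q : ℝ × (X × Y) => Φ q.1 q.2) ((univ : Set ℝ) ×ˢ K) ∧
  (∀ t : ℝ, MapsTo (Φ t) K K) ∧
  (∀ p ∈ K, Φ 0 p = p) ∧
  (∀ s t : ℝ, ∀ p ∈ K, Φ (s + t) p = Φ s (Φ t p)) ∧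
  (∀ t ≥ (0:ℝ), ∀ p ∈ K, Φ t p = (u t p.1 p.2, σ t p.2))

/-- The flow extension `Φ` of `K` is minimal. -/
def IsMinimalExtension (K : Set (X × Y)) (Φ : ℝ → X × Y → X × Y) : Prop :=
  ∀ S : Set (X × Y), S ⊆ K → S.Nonempty → IsCompact S → (∀ t, Φ t '' S = S) → S = K

/-- `Γ` (given by `v`) is upper-comparable with respect to `Π` (given by `u`). -/
def UpperComparable (Xp : Set X) (u v : ℝ → X → Y → X) : Prop :=
  ∀ t ≥ (0:ℝ), ∀ y : Y, ∀ x₁ ∈ Xp, ∀ x₂ ∈ Xp,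
    coneLE Xp x₁ x₂ → coneLE Xp (v t x₁ y) (u t x₂ y)

/-- Every nonempty compact subset of `Xp` has a greatest lower bound in `X`. -/
def HasGLBs (Xp : Set X) : Prop :=
  ∀ S : Set X, S ⊆ Xp → S.Nonempty → IsCompact S →
    ∃ g : X, (∀ s ∈ S, coneLE Xp g s) ∧ ∀ g' : X, (∀ s ∈ S, coneLE Xp g' s) → coneLE Xp g' g

end SkewProductFramework

section AuxLemmas
set_option linter.unusedSectionVars false

variable {X Y : Type*} [NormedAddCommGroup X] [NormedSpace ℝ X]
  [MetricSpace Y] [CompactSpace Y]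
variable {σ : ℝ → Y → Y} {Xp : Set X} {u : ℝ → X → Y → X}

lemma sigma_cont (hflow : IsFlow σ) (t : ℝ) : Continuous (σ t) :=
  hflow.cont.comp (continuous_const.prodMk continuous_id)

/-- A nonempty closed positively invariant subset of a minimal flow is everything. -/
lemma closed_posinv_eq_univ (hflow : IsFlow σ) (hmin : IsMinimalFlow σ)
    {E : Set Y} (hEc : IsClosed E) (hEne : E.Nonempty)
    (hEinv : ∀ t ≥ (0:ℝ), ∀ y ∈ E, σ t y ∈ E) : E = univ := by
  obtain ⟨y₁, hy₁⟩ := hEne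
  set T : ℝ → Set Y := fun r => {y | ∃ t : ℝ, r ≤ t ∧ y = σ t y₁} with hT
  set C : ℕ → Set Y := fun n => closure (T n) with hC
  have hTmem : ∀ r t : ℝ, r ≤ t → σ t y₁ ∈ T r := fun r t h => ⟨t, h, rfl⟩
  have hCne : ∀ n, (C n).Nonempty := fun n => ⟨σ n y₁, subset_closure (hTmem _ _ le_rfl)⟩
  have hCcl : ∀ n, IsClosed (C n) := fun n => isClosed_closure
  have hCcpt : ∀ n, IsCompact (C n) := fun n => (hCcl n).isCompact
  have hCdec : ∀ n, C (n+1) ⊆ C n := by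
    intro n; apply closure_mono; rintro y ⟨t, ht, rfl⟩
    exact ⟨t, le_trans (by exact_mod_cast Nat.le_succ n) ht, rfl⟩
  have hSne : (⋂ n, C n).Nonempty :=
    IsCompact.nonempty_iInter_of_sequence_nonempty_isCompact_isClosed C hCdec hCne (hCcpt 0) hCcl
  set S := ⋂ n, C n with hS
  have hsub : ∀ r : ℝ, ∀ x ∈ S, σ r x ∈ S := by
    intro r x hx
    rw [hS, mem_iInter]; intro m
    obtain ⟨n, hn⟩ := exists_nat_ge ((m:ℝ) - r)
    have hxn : x ∈ C n := mem_iInter.mp hx n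
    have himg : σ r '' (T n) ⊆ T m := by
      rintro y ⟨w, ⟨t, htn, rfl⟩, rfl⟩
      exact ⟨r + t, by linarith, (hflow.map_add r t y₁).symm⟩
    have hmemcl : σ r x ∈ closure (σ r '' T n) :=
      image_closure_subset_closure_image (sigma_cont hflow r) ⟨x, hxn, rfl⟩
    exact closure_mono himg hmemcl
  have hid : ∀ r : ℝ, ∀ y : Y, σ r (σ (-r) y) = y := by
    intro r y
    rw [← hflow.map_add, add_neg_cancel, hflow.map_zero]
  have hinv : ∀ r : ℝ, σ r '' S = S := by
    intro r; apply Subset.antisymm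
    · rintro _ ⟨x, hx, rfl⟩; exact hsub r x hx
    · intro x hx
      exact ⟨σ (-r) x, hsub (-r) x hx, hid r x⟩
  have hScl : IsClosed S := isClosed_iInter (fun n => hCcl n)
  have hSuniv := hmin S hSne hScl.isCompact hinv
  have hSE : S ⊆ E := by
    intro x hx
    have hx0 : x ∈ closure (T 0) := by
      have := mem_iInter.mp hx 0
      simpa [hC] using this
    have hTE : T 0 ⊆ E := by
      rintro y ⟨t, ht, rfl⟩
      exact hEinv t (by exact_mod_cast ht) y₁ hy₁
    have := closure_mono hTE hx0
    rwa [hEc.closure_eq] at this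
  exact eq_univ_of_univ_subset (hSuniv ▸ hSE)

/-- If one cover is below another somewhere, then everywhere. -/
lemma cover_le_all (hflow : IsFlow σ) (hmin : IsMinimalFlow σ) (hcone : IsClosedCone Xp)
    (hmono : IsMonotoneSP Xp u)
    {c₁ c₂ : Y → X} (h1 : IsOneCoverMap Xp σ u c₁) (h2 : IsOneCoverMap Xp σ u c₂)
    {y₁ : Y} (h : coneLE Xp (c₁ y₁) (c₂ y₁)) (y : Y) : coneLE Xp (c₁ y) (c₂ y) := by
  have hE : {y | coneLE Xp (c₁ y) (c₂ y)} = univ := by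
    apply closed_posinv_eq_univ hflow hmin (hcone.closed.preimage (h2.1.sub h1.1)) ⟨y₁, h⟩
    intro t ht y' hy'
    have hord := hmono t ht y' (c₁ y') (h1.2.1 y') (c₂ y') (h2.2.1 y') hy'
    show coneLE Xp (c₁ (σ t y')) (c₂ (σ t y'))
    rwa [← h1.2.2 t ht y', ← h2.2.2 t ht y']
  exact hE.ge (mem_univ y)

/-- If two covers agree somewhere, they agree everywhere. -/
lemma cover_eq_all (hflow : IsFlow σ) (hmin : IsMinimalFlow σ)
    {c₁ c₂ : Y → X} (h1 : IsOneCoverMap Xp σ u c₁) (h2 : IsOneCoverMap Xp σ u c₂)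
    {y₁ : Y} (h : c₁ y₁ = c₂ y₁) (y : Y) : c₁ y = c₂ y := by
  have hE : {y | c₁ y = c₂ y} = univ := by
    apply closed_posinv_eq_univ hflow hmin (isClosed_eq h1.1 h2.1) ⟨y₁, h⟩
    intro t ht y' hy'
    show c₁ (σ t y') = c₂ (σ t y')
    rw [← h1.2.2 t ht y', ← h2.2.2 t ht y']
    show u t (c₁ y') y' = u t (c₂ y') y'
    rw [show c₁ y' = c₂ y' from hy']
  exact hE.ge (mem_univ y)

/-- Uniform stability specialised to time `s = 0`. -/
lemma stable0 (hsp : IsSkewProduct Xp σ u) {x₀ : X} {y₀ : Y}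
    (hst : IsUnifStable Xp u x₀ y₀) (hx₀ : x₀ ∈ Xp) :
    ∀ ε > (0:ℝ), ∃ δ > (0:ℝ), ∀ x ∈ Xp, ‖x₀ - x‖ ≤ δ → ∀ t ≥ (0:ℝ),
      ‖u t x₀ y₀ - u t x y₀‖ < ε := by
  intro ε hε
  obtain ⟨δ, hδ, H⟩ := hst ε hε
  refine ⟨δ, hδ, fun x hx hnorm t ht => ?_⟩
  have h0 : ‖u 0 x₀ y₀ - u 0 x y₀‖ ≤ δ := by
    rw [hsp.map_zero x₀ hx₀, hsp.map_zero x hx]; exact hnorm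
  have := H x hx 0 le_rfl h0 t ht
  simpa using this

lemma orbit_mem_closure {x : X} {y : Y} {t : ℝ} (ht : 0 ≤ t) :
    (u t x y, σ t y) ∈ closure (fwdOrbit σ u x y) :=
  subset_closure ⟨t, ht, rfl⟩

/-- Omega-limit sets of precompact orbits are nonempty. -/
lemma omega_nonempty {x : X} {y : Y}
    (horbc : IsCompact (closure (fwdOrbit σ u x y))) :
    (omegaSet σ u x y).Nonempty := by
  have hmem : ∀ n : ℕ, (u n x y, σ n y) ∈ closure (fwdOrbit σ u x y) :=
    fun n => orbit_mem_closure (Nat.cast_nonneg n)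
  obtain ⟨p, -, φ, hφ, htend⟩ := horbc.tendsto_subseq hmem
  exact ⟨p, fun k => (φ k : ℝ), tendsto_natCast_atTop_atTop.comp hφ.tendsto_atTop, htend⟩

/-- Omega-limit points lie in the cone, and the omega-limit set is positively invariant. -/
lemma omega_posinv (hflow : IsFlow σ) (hcone : IsClosedCone Xp) (hsp : IsSkewProduct Xp σ u)
    {x : X} (hx : x ∈ Xp) {y₀ : Y} {z : X} {y : Y}
    (hzy : (z, y) ∈ omegaSet σ u x y₀) {t₀ : ℝ} (ht₀ : 0 ≤ t₀) :
    z ∈ Xp ∧ (u t₀ z y, σ t₀ y) ∈ omegaSet σ u x y₀ := by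
  obtain ⟨tn, htn, hconv⟩ := hzy
  have hzx : Tendsto (fun k => u (tn k) x y₀) atTop (𝓝 z) := (continuous_fst.tendsto _).comp hconv
  have hzYt : Tendsto (fun k => σ (tn k) y₀) atTop (𝓝 y) := (continuous_snd.tendsto _).comp hconv
  have hev : ∀ᶠ k in atTop, 0 ≤ tn k := htn.eventually_ge_atTop 0
  have hzXp : z ∈ Xp := hcone.closed.mem_of_tendsto hzx (hev.mono fun k hk => hsp.mem _ hk x hx y₀)
  refine ⟨hzXp, fun k => t₀ + tn k, tendsto_atTop_add_const_left _ t₀ htn, ?_⟩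
  have hxcomp : Tendsto (fun k => u (t₀ + tn k) x y₀) atTop (𝓝 (u t₀ z y)) := by
    have hmemev : ∀ᶠ k in atTop, ((t₀ : ℝ), (u (tn k) x y₀, σ (tn k) y₀)) ∈
        (Ici (0:ℝ)) ×ˢ Xp ×ˢ (univ : Set Y) :=
      hev.mono fun k hk => ⟨ht₀, hsp.mem _ hk x hx y₀, trivial⟩
    have hseq : Tendsto (fun k => ((t₀ : ℝ), (u (tn k) x y₀, σ (tn k) y₀))) atTop
        (𝓝 (t₀, (z, y))) := tendsto_const_nhds.prodMk_nhds hconv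
    have hcw : ContinuousWithinAt (fun p : ℝ × X × Y => u p.1 p.2.1 p.2.2)
        ((Ici (0:ℝ)) ×ˢ Xp ×ˢ (univ : Set Y)) (t₀, (z, y)) :=
      hsp.cont _ ⟨ht₀, hzXp, trivial⟩
    have hcw' : Tendsto (fun p : ℝ × X × Y => u p.1 p.2.1 p.2.2)
        (𝓝[(Ici (0:ℝ)) ×ˢ Xp ×ˢ (univ : Set Y)] (t₀, (z, y))) (𝓝 (u t₀ z y)) := hcw
    have hcomp : Tendsto (fun k => u t₀ (u (tn k) x y₀) (σ (tn k) y₀)) atTop (𝓝 (u t₀ z y)) :=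
      hcw'.comp (tendsto_nhdsWithin_of_tendsto_nhds_of_eventually_within _ hseq hmemev)
    exact Filter.Tendsto.congr'
      (hev.mono fun k hk => (hsp.map_add t₀ ht₀ (tn k) hk x hx y₀).symm) hcomp
  have hycomp : Tendsto (fun k => σ (t₀ + tn k) y₀) atTop (𝓝 (σ t₀ y)) := by
    have heq : (fun k => σ (t₀ + tn k) y₀) = fun k => σ t₀ (σ (tn k) y₀) :=
      funext fun k => hflow.map_add t₀ (tn k) y₀
    rw [heq]
    exact ((sigma_cont hflow t₀).tendsto y).comp hzYt
  exact hxcomp.prodMk_nhds hycomp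

/-- If `x ≤ c y₀` for a cover `c`, then every omega-limit point of `x` is below the cover. -/
lemma omega_le_cover (hcone : IsClosedCone Xp) (hmono : IsMonotoneSP Xp u)
    {c : Y → X} (hc : IsOneCoverMap Xp σ u c)
    {x : X} (hx : x ∈ Xp) {y₀ : Y} (hle : coneLE Xp x (c y₀))
    {z : X} {y : Y} (hzy : (z, y) ∈ omegaSet σ u x y₀) : coneLE Xp z (c y) := by
  obtain ⟨tn, htn, hconv⟩ := hzy
  have hzx : Tendsto (fun k => u (tn k) x y₀) atTop (𝓝 z) := (continuous_fst.tendsto _).comp hconv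
  have hzY : Tendsto (fun k => σ (tn k) y₀) atTop (𝓝 y) := (continuous_snd.tendsto _).comp hconv
  have hev : ∀ᶠ k in atTop, 0 ≤ tn k := htn.eventually_ge_atTop 0
  refine hcone.closed.mem_of_tendsto (((hc.1.tendsto y).comp hzY).sub hzx)
    (hev.mono fun k hk => ?_)
  have := hmono (tn k) hk y₀ x hx (c y₀) (hc.2.1 y₀) hle
  rwa [hc.2.2 (tn k) hk y₀] at this

/-- Key lemma: two 1-covers cannot be pointwise-incomparable everywhere. -/
lemma no_incomparable (hflow : IsFlow σ) (hcone : IsClosedCone Xp)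
    (hsp : IsSkewProduct Xp σ u) (hsop : IsSOP Xp u) (hglb : HasGLBs Xp)
    (horb : ∀ x ∈ Xp, ∀ y : Y,
      IsCompact (closure (fwdOrbit σ u x y)) ∧ IsUnifStable Xp u x y)
    {c₁ c₂ : Y → X} (h1 : IsOneCoverMap Xp σ u c₁) (h2 : IsOneCoverMap Xp σ u c₂)
    (y₀ : Y)
    (hinc : ∀ y : Y, ¬ coneLE Xp (c₁ y) (c₂ y) ∧ ¬ coneLE Xp (c₂ y) (c₁ y)) : False := by
  classical
  have hmono := hsop.1
  obtain ⟨t₀, ht₀pos, hSOP⟩ := hsop.2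
  -- the uniform "margin" between the cover c₂ and the set of points below c₁
  have hmargin : ∃ η > (0:ℝ), ∀ y : Y, ∀ w : X, coneLE Xp w (c₁ y) → η ≤ ‖c₂ y - w‖ := by
    by_contra hcon
    push_neg at hcon
    have hseq : ∀ n : ℕ, ∃ y w, coneLE Xp w (c₁ y) ∧ ‖c₂ y - w‖ < 1/(n+1) := by
      intro n
      obtain ⟨y, w, hw, hlt⟩ := hcon (1/(n+1)) (by positivity)
      exact ⟨y, w, hw, hlt⟩
    choose ys ws hws hnorm using hseq
    obtain ⟨y, -, φ, hφ, hytend⟩ := isCompact_univ.tendsto_subseq (fun n => mem_univ (ys n))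
    have hrate : Tendsto (fun j : ℕ => 1/((φ j : ℝ)+1)) atTop (𝓝 0) :=
      tendsto_one_div_add_atTop_nhds_zero_nat.comp hφ.tendsto_atTop
    have h2t : Tendsto (fun j => c₂ (ys (φ j))) atTop (𝓝 (c₂ y)) := (h2.1.tendsto y).comp hytend
    have h0 : Tendsto (fun j => c₂ (ys (φ j)) - ws (φ j)) atTop (𝓝 0) :=
      squeeze_zero_norm (fun j => (hnorm (φ j)).le) hrate
    have hwtend : Tendsto (fun j => ws (φ j)) atTop (𝓝 (c₂ y)) := by
      have := h2t.sub h0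
      simpa using this
    have hmem : c₁ y - c₂ y ∈ Xp :=
      hcone.closed.mem_of_tendsto (((h1.1.tendsto y).comp hytend).sub hwtend)
        (Eventually.of_forall fun j => hws (φ j))
    exact (hinc y).2 hmem
  obtain ⟨η, hη, hmarg⟩ := hmargin
  -- greatest lower bound of the two cover values at y₀
  have hsub2 : {c₁ y₀, c₂ y₀} ⊆ Xp := by
    rintro x (rfl|rfl)
    exacts [h1.2.1 y₀, h2.2.1 y₀]
  obtain ⟨g, hglow, hgmax⟩ := hglb {c₁ y₀, c₂ y₀} hsub2 ⟨c₁ y₀, by simp⟩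
    ((Set.finite_singleton _).insert _).isCompact
  have hg1 : coneLE Xp g (c₁ y₀) := hglow _ (by simp)
  have hg2 : coneLE Xp g (c₂ y₀) := hglow _ (by simp)
  have hgXp : g ∈ Xp := by
    have h0 : coneLE Xp 0 g := hgmax 0 (fun s hs => by simpa [coneLE] using hsub2 hs)
    simpa [coneLE] using h0
  set e : X := c₂ y₀ - g with he
  have heXp : e ∈ Xp := hg2
  have hene : e ≠ 0 := by
    intro h0
    have hgc : c₂ y₀ = g := by
      have := sub_eq_zero.mp h0; exact this
    apply (hinc y₀).2
    show c₁ y₀ - c₂ y₀ ∈ Xp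
    rw [hgc]; exact hg1
  have hepos : 0 < ‖e‖ := norm_pos_iff.mpr hene
  -- the segment from g towards c₂ y₀
  set xl : ℝ → X := fun l => g + l • e with hxl
  have hxlXp : ∀ l : ℝ, 0 ≤ l → xl l ∈ Xp :=
    fun l hl => hcone.add_mem g hgXp _ (hcone.smul_mem l hl e heXp)
  have hxl_le : ∀ l : ℝ, l ≤ 1 → coneLE Xp (xl l) (c₂ y₀) := by
    intro l hl
    show c₂ y₀ - xl l ∈ Xp
    have hrw : c₂ y₀ - xl l = (1 - l) • e := by
      rw [hxl, he]; module
    rw [hrw]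
    exact hcone.smul_mem _ (by linarith) e heXp
  have hxl_sub : ∀ a b : ℝ, xl a - xl b = (a - b) • e := by
    intro a b; rw [hxl]; module
  have hxl_norm : ∀ a b : ℝ, b ≤ a → ‖xl a - xl b‖ = (a-b) * ‖e‖ := by
    intro a b hba
    rw [hxl_sub, norm_smul, Real.norm_eq_abs, abs_of_nonneg (by linarith)]
  -- orbit of xl l stays below the cover c₂
  have horb_le_c2 : ∀ l : ℝ, 0 ≤ l → l ≤ 1 → ∀ t ≥ (0:ℝ),
      coneLE Xp (u t (xl l) y₀) (c₂ (σ t y₀)) := by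
    intro l h0 h1' t ht
    have := hmono t ht y₀ (xl l) (hxlXp l h0) (c₂ y₀) (h2.2.1 y₀) (hxl_le l h1')
    rwa [h2.2.2 t ht y₀] at this
  -- the set of parameters whose omega-limit set touches the region below c₁
  set Lam : Set ℝ := {l | l ∈ Icc (0:ℝ) 1 ∧
      ∃ z y, (z, y) ∈ omegaSet σ u (xl l) y₀ ∧ coneLE Xp z (c₁ y)} with hLam
  have hbdd : BddAbove Lam := ⟨1, fun l hl => hl.1.2⟩
  have h0mem : (0:ℝ) ∈ Lam := by
    refine ⟨⟨le_rfl, zero_le_one⟩, ?_⟩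
    obtain ⟨⟨z, y⟩, hzy⟩ := omega_nonempty (horb _ (hxlXp 0 le_rfl) y₀).1
    refine ⟨z, y, hzy, ?_⟩
    apply omega_le_cover hcone hmono h1 (hxlXp 0 le_rfl) _ hzy
    show c₁ y₀ - xl 0 ∈ Xp
    simpa [hxl, coneLE] using hg1
  have hLne : Lam.Nonempty := ⟨0, h0mem⟩
  set ls : ℝ := sSup Lam with hls
  have hls0 : 0 ≤ ls := le_csSup hbdd h0mem
  have hls1 : ls ≤ 1 := csSup_le hLne (fun l hl => hl.1.2)
  -- parameters in Lam are bounded away from 1, via the margin and uniform stability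
  obtain ⟨δ₁, hδ₁, hstab₁⟩ := stable0 hsp (horb _ (h2.2.1 y₀) y₀).2 (h2.2.1 y₀) (η/2)
    (by positivity)
  have hupper : ∀ l ∈ Lam, l ≤ 1 - δ₁ / ‖e‖ := by
    intro l hl
    by_contra hcon
    push_neg at hcon
    obtain ⟨⟨hl0, hl1⟩, z, y, hzy, hzc₁⟩ := hl
    have hnear : ‖c₂ y₀ - xl l‖ ≤ δ₁ := by
      have hrw : c₂ y₀ - xl l = (1 - l) • e := by rw [hxl, he]; module
      rw [hrw, norm_smul, Real.norm_eq_abs, abs_of_nonneg (by linarith)]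
      have hlt : (1 - l) * ‖e‖ < (δ₁ / ‖e‖) * ‖e‖ := by
        apply mul_lt_mul_of_pos_right _ hepos
        linarith
      rw [div_mul_cancel₀ _ hepos.ne'] at hlt
      exact hlt.le
    have hcl : ∀ t ≥ (0:ℝ), ‖u t (c₂ y₀) y₀ - u t (xl l) y₀‖ < η/2 :=
      fun t ht => hstab₁ _ (hxlXp l hl0) hnear t ht
    obtain ⟨tn, htn, hconv⟩ := hzy
    have hzx : Tendsto (fun k => u (tn k) (xl l) y₀) atTop (𝓝 z) :=
      (continuous_fst.tendsto _).comp hconv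
    have hzY : Tendsto (fun k => σ (tn k) y₀) atTop (𝓝 y) :=
      (continuous_snd.tendsto _).comp hconv
    have hbound : ∀ᶠ k in atTop, ‖c₂ (σ (tn k) y₀) - u (tn k) (xl l) y₀‖ ≤ η/2 :=
      (htn.eventually_ge_atTop 0).mono fun k hk => by
        rw [← h2.2.2 (tn k) hk y₀]; exact (hcl (tn k) hk).le
    have hlim : Tendsto (fun k => ‖c₂ (σ (tn k) y₀) - u (tn k) (xl l) y₀‖) atTop
        (𝓝 ‖c₂ y - z‖) := (((h2.1.tendsto y).comp hzY).sub hzx).norm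
    have hfin : ‖c₂ y - z‖ ≤ η/2 := le_of_tendsto hlim hbound
    have := hmarg y z hzc₁
    linarith
  have hls_lt1 : ls < 1 := by
    have h1' : ls ≤ 1 - δ₁/‖e‖ := csSup_le hLne hupper
    have : 0 < δ₁/‖e‖ := by positivity
    linarith
  -- stability at the basepoint xl ls
  have hstar := stable0 hsp (horb _ (hxlXp ls hls0) y₀).2 (hxlXp ls hls0)
  -- for each k, a time ≥ k where the orbit of xl ls is 2/(k+1)-close to a point under c₁
  have hex : ∀ k : ℕ, ∃ (t : ℝ) (z : X) (y : Y), (k:ℝ) ≤ t ∧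
      coneLE Xp z (c₁ y) ∧ dist (u t (xl ls) y₀) z ≤ 2/(k+1) ∧
      dist (σ t y₀) y ≤ 2/(k+1) := by
    intro k
    obtain ⟨δk, hδk, hstk⟩ := hstar (1/(k+1)) (by positivity)
    obtain ⟨l, hlmem, hllt⟩ := exists_lt_of_lt_csSup hLne
      (sub_lt_self ls (by positivity : (0:ℝ) < δk/‖e‖))
    have hlle : l ≤ ls := le_csSup hbdd hlmem
    obtain ⟨⟨hl0, hl1⟩, z, y, hzy, hzc₁⟩ := hlmem
    have hclose : ‖xl ls - xl l‖ ≤ δk := by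
      rw [hxl_norm ls l hlle]
      have h1' : (ls - l) * ‖e‖ ≤ (δk/‖e‖) * ‖e‖ := by
        apply mul_le_mul_of_nonneg_right _ hepos.le
        linarith
      rwa [div_mul_cancel₀ _ hepos.ne'] at h1'
    have horbclose : ∀ t ≥ (0:ℝ), ‖u t (xl ls) y₀ - u t (xl l) y₀‖ < 1/(k+1) :=
      fun t ht => hstk _ (hxlXp l hl0) hclose t ht
    obtain ⟨tn, htn, hconv⟩ := hzy
    have hev1 : ∀ᶠ j in atTop, (k:ℝ) ≤ tn j := htn.eventually_ge_atTop _
    have hev2 : ∀ᶠ j in atTop,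
        dist ((u (tn j) (xl l) y₀, σ (tn j) y₀)) (z, y) < 1/(k+1) :=
      Metric.tendsto_nhds.mp hconv _ (by positivity)
    obtain ⟨j, hj1, hj2⟩ := (hev1.and hev2).exists
    rw [Prod.dist_eq, max_lt_iff] at hj2
    have htj0 : (0:ℝ) ≤ tn j := le_trans (Nat.cast_nonneg k) hj1
    refine ⟨tn j, z, y, hj1, hzc₁, ?_, ?_⟩
    · calc dist (u (tn j) (xl ls) y₀) z
          ≤ dist (u (tn j) (xl ls) y₀) (u (tn j) (xl l) y₀) + dist (u (tn j) (xl l) y₀) z :=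
            dist_triangle _ _ _
        _ ≤ 1/(k+1) + 1/(k+1) := by
            refine add_le_add ?_ hj2.1.le
            rw [dist_eq_norm]
            exact (horbclose (tn j) htj0).le
        _ = 2/(k+1) := by ring
    · refine le_trans hj2.2.le ?_
      have : (0:ℝ) < (k:ℝ)+1 := by positivity
      rw [div_le_div_iff₀ this this]
      nlinarith
  choose tk zk yk htk hzk hdx hdy using hex
  have ht0k : ∀ k : ℕ, (0:ℝ) ≤ tk k := fun k => le_trans (Nat.cast_nonneg k) (htk k)
  -- extract a convergent subsequence of the orbit points
  have hPmem : ∀ k, (u (tk k) (xl ls) y₀, σ (tk k) y₀) ∈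
      closure (fwdOrbit σ u (xl ls) y₀) := fun k => orbit_mem_closure (ht0k k)
  obtain ⟨⟨zs, ys⟩, -, φ, hφ, hPt⟩ := (horb _ (hxlXp ls hls0) y₀).1.tendsto_subseq hPmem
  have hPx : Tendsto (fun j => u (tk (φ j)) (xl ls) y₀) atTop (𝓝 zs) :=
    (continuous_fst.tendsto _).comp hPt
  have hPy : Tendsto (fun j => σ (tk (φ j)) y₀) atTop (𝓝 ys) :=
    (continuous_snd.tendsto _).comp hPt
  have hrate2 : Tendsto (fun j : ℕ => 2/((φ j : ℝ)+1)) atTop (𝓝 0) := by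
    have hbase : Tendsto (fun n : ℕ => 2/((n:ℝ)+1)) atTop (𝓝 0) := by
      have := tendsto_one_div_add_atTop_nhds_zero_nat.const_mul (2:ℝ)
      simpa [mul_one_div, div_eq_mul_inv] using this
    exact hbase.comp hφ.tendsto_atTop
  have hzs : Tendsto (fun j => zk (φ j)) atTop (𝓝 zs) := by
    rw [tendsto_iff_dist_tendsto_zero]
    apply squeeze_zero (fun j => dist_nonneg)
      (g := fun j => 2/((φ j:ℝ)+1) + dist (u (tk (φ j)) (xl ls) y₀) zs)
    · intro j
      calc dist (zk (φ j)) zs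
          ≤ dist (zk (φ j)) (u (tk (φ j)) (xl ls) y₀) + dist (u (tk (φ j)) (xl ls) y₀) zs :=
            dist_triangle _ _ _
        _ ≤ 2/((φ j:ℝ)+1) + dist (u (tk (φ j)) (xl ls) y₀) zs := by
            refine add_le_add ?_ le_rfl
            rw [dist_comm]; exact hdx (φ j)
    · have := hrate2.add (tendsto_iff_dist_tendsto_zero.mp hPx)
      simpa using this
  have hys : Tendsto (fun j => yk (φ j)) atTop (𝓝 ys) := by
    rw [tendsto_iff_dist_tendsto_zero]
    apply squeeze_zero (fun j => dist_nonneg)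
      (g := fun j => 2/((φ j:ℝ)+1) + dist (σ (tk (φ j)) y₀) ys)
    · intro j
      calc dist (yk (φ j)) ys
          ≤ dist (yk (φ j)) (σ (tk (φ j)) y₀) + dist (σ (tk (φ j)) y₀) ys := dist_triangle _ _ _
        _ ≤ 2/((φ j:ℝ)+1) + dist (σ (tk (φ j)) y₀) ys := by
            refine add_le_add ?_ le_rfl
            rw [dist_comm]; exact hdy (φ j)
    · have := hrate2.add (tendsto_iff_dist_tendsto_zero.mp hPy)
      simpa using this
  -- properties of the limit point (zs, ys)
  have hzc₁s : coneLE Xp zs (c₁ ys) :=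
    hcone.closed.mem_of_tendsto (((h1.1.tendsto ys).comp hys).sub hzs)
      (Eventually.of_forall fun j => hzk (φ j))
  have hzc₂s : coneLE Xp zs (c₂ ys) :=
    hcone.closed.mem_of_tendsto (((h2.1.tendsto ys).comp hPy).sub hPx)
      (Eventually.of_forall fun j => horb_le_c2 ls hls0 hls1 (tk (φ j)) (ht0k (φ j)))
  have hzsXp : zs ∈ Xp :=
    hcone.closed.mem_of_tendsto hPx
      (Eventually.of_forall fun j => hsp.mem _ (ht0k (φ j)) _ (hxlXp ls hls0) y₀)
  have htktop : Tendsto (fun j => tk (φ j)) atTop atTop := by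
    apply tendsto_atTop_mono (fun j => ?_) tendsto_natCast_atTop_atTop
    calc (j:ℝ) ≤ (φ j : ℝ) := by exact_mod_cast hφ.le_apply
      _ ≤ tk (φ j) := htk (φ j)
  have homega_s : (zs, ys) ∈ omegaSet σ u (xl ls) y₀ := ⟨fun j => tk (φ j), htktop, hPt⟩
  -- strict inequality zs < c₁ ys, and the SOP separation
  have hne_s : zs ≠ c₁ ys := by
    intro heq
    apply (hinc ys).1
    show c₂ ys - c₁ ys ∈ Xp
    rw [← heq]; exact hzc₂s
  obtain ⟨U, V, hUopen, hVopen, hzU, hc₁V, hsep⟩ :=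
    hSOP ys zs hzsXp (c₁ ys) (h1.2.1 ys) ⟨hzc₁s, hne_s⟩
  obtain ⟨ε, hεpos, hball⟩ := Metric.isOpen_iff.mp hUopen zs hzU
  -- choose a parameter lm slightly above ls
  obtain ⟨δm, hδmpos, hstabm⟩ := hstar (ε/2) (by positivity)
  set lm : ℝ := min (ls + δm/‖e‖) ((ls+1)/2) with hlm
  have hlm_gt : ls < lm := by
    apply lt_min
    · have : 0 < δm/‖e‖ := by positivity
      linarith
    · linarith
  have hlm_le1 : lm ≤ 1 := le_trans (min_le_right _ _) (by linarith)
  have hlm0 : 0 ≤ lm := le_trans hls0 hlm_gt.le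
  have hclosem : ‖xl lm - xl ls‖ ≤ δm := by
    rw [hxl_norm lm ls hlm_gt.le]
    have h1' : (lm - ls) * ‖e‖ ≤ (δm/‖e‖) * ‖e‖ := by
      apply mul_le_mul_of_nonneg_right _ hepos.le
      have := min_le_left (ls + δm/‖e‖) ((ls+1)/2)
      have h2' : lm ≤ ls + δm/‖e‖ := this
      linarith
    rwa [div_mul_cancel₀ _ hepos.ne'] at h1'
  have horbm : ∀ t ≥ (0:ℝ), ‖u t (xl ls) y₀ - u t (xl lm) y₀‖ < ε/2 := by
    intro t ht
    apply hstabm _ (hxlXp lm hlm0) _ t ht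
    rw [← norm_neg]
    simpa using hclosem
  -- extract the corresponding omega-limit point for lm over the same times
  have hQmem : ∀ j, (u (tk (φ j)) (xl lm) y₀, σ (tk (φ j)) y₀) ∈
      closure (fwdOrbit σ u (xl lm) y₀) := fun j => orbit_mem_closure (ht0k (φ j))
  obtain ⟨⟨zm, ym⟩, -, ψ, hψ, hQt⟩ := (horb _ (hxlXp lm hlm0) y₀).1.tendsto_subseq hQmem
  have hQx : Tendsto (fun i => u (tk (φ (ψ i))) (xl lm) y₀) atTop (𝓝 zm) :=
    (continuous_fst.tendsto _).comp hQt
  have hQy : Tendsto (fun i => σ (tk (φ (ψ i))) y₀) atTop (𝓝 ym) :=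
    (continuous_snd.tendsto _).comp hQt
  have hym : ym = ys := tendsto_nhds_unique hQy (hPy.comp hψ.tendsto_atTop)
  subst hym
  have hdistzm : dist zm zs ≤ ε/2 := by
    have hd : Tendsto (fun i => dist (u (tk (φ (ψ i))) (xl lm) y₀)
        (u (tk (φ (ψ i))) (xl ls) y₀)) atTop (𝓝 (dist zm zs)) :=
      hQx.dist (hPx.comp hψ.tendsto_atTop)
    refine le_of_tendsto hd (Eventually.of_forall fun i => ?_)
    rw [dist_comm, dist_eq_norm]
    exact (horbm _ (ht0k (φ (ψ i)))).le
  have hzmU : zm ∈ U := hball (by rw [Metric.mem_ball]; linarith)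
  have hzmXp : zm ∈ Xp :=
    hcone.closed.mem_of_tendsto hQx
      (Eventually.of_forall fun i => hsp.mem _ (ht0k (φ (ψ i))) _ (hxlXp lm hlm0) y₀)
  have homega_m : (zm, ym) ∈ omegaSet σ u (xl lm) y₀ :=
    ⟨fun i => tk (φ (ψ i)), htktop.comp hψ.tendsto_atTop, hQt⟩
  -- apply the SOP separation at time t₀
  have hsep0 := hsep t₀ le_rfl
  have hlt := hsep0 (u t₀ zm ym) ⟨zm, ⟨hzmU, hzmXp⟩, rfl⟩
    (u t₀ (c₁ ym) ym) ⟨c₁ ym, ⟨hc₁V, h1.2.1 ym⟩, rfl⟩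
  have hle0 : coneLE Xp (u t₀ zm ym) (c₁ (σ t₀ ym)) := by
    have := hlt.1
    rwa [h1.2.2 t₀ ht₀pos.le ym] at this
  have hinvm := (omega_posinv hflow hcone hsp (hxlXp lm hlm0) homega_m ht₀pos.le).2
  have hmemLam : lm ∈ Lam := ⟨⟨hlm0, hlm_le1⟩, u t₀ zm ym, σ t₀ ym, hinvm, hle0⟩
  exact absurd (le_csSup hbdd hmemLam) (not_le.mpr hlm_gt)

end AuxLemmas

/-- **Statement 7** (Lemma 4.1, first part). Under the standing hypotheses, the union
`A` of all 1-covers of `Y` for `Π` is totally ordered with respect to `<`: two distinct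
1-covers `c₁, c₂` satisfy either `c₁(y) < c₂(y)` for every `y`, or `c₂(y) < c₁(y)` for
every `y`; in particular each fiber `A(y)` is totally ordered. -/
theorem one_covers_totally_ordered
    {X Y : Type*} [NormedAddCommGroup X] [NormedSpace ℝ X] [MetricSpace Y] [CompactSpace Y]
    (σ : ℝ → Y → Y) (Xp : Set X) (u : ℝ → X → Y → X)
    (hflow : IsFlow σ) (hmin : IsMinimalFlow σ) (hcone : IsClosedCone Xp)
    (hsp : IsSkewProduct Xp σ u) (hsop : IsSOP Xp u) (hfc : IsFiberCompact Xp u)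
    (hglb : HasGLBs Xp)
    (horb : ∀ x ∈ Xp, ∀ y : Y,
      IsCompact (closure (fwdOrbit σ u x y)) ∧ IsUnifStable Xp u x y) :
    (∀ c₁ c₂ : Y → X, IsOneCoverMap Xp σ u c₁ → IsOneCoverMap Xp σ u c₂ → c₁ ≠ c₂ →
      (∀ y : Y, coneLT Xp (c₁ y) (c₂ y)) ∨ (∀ y : Y, coneLT Xp (c₂ y) (c₁ y))) ∧
    ∀ y : Y, ∀ a ∈ {x : X | ∃ c : Y → X, IsOneCoverMap Xp σ u c ∧ c y = x},
      ∀ b ∈ {x : X | ∃ c : Y → X, IsOneCoverMap Xp σ u c ∧ c y = x},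
        coneLE Xp a b ∨ coneLE Xp b a := by
  have hmono := hsop.1
  have hpart1 : ∀ c₁ c₂ : Y → X, IsOneCoverMap Xp σ u c₁ → IsOneCoverMap Xp σ u c₂ → c₁ ≠ c₂ →
      (∀ y : Y, coneLT Xp (c₁ y) (c₂ y)) ∨ (∀ y : Y, coneLT Xp (c₂ y) (c₁ y)) := by
    intro c₁ c₂ h1 h2 hne
    by_cases hY : Nonempty Y
    · have hneq : ∀ y, c₁ y ≠ c₂ y := by
        intro y heq
        exact hne (funext fun y' => cover_eq_all hflow hmin h1 h2 heq y')
      by_cases hcomp : ∃ y, coneLE Xp (c₁ y) (c₂ y) ∨ coneLE Xp (c₂ y) (c₁ y)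
      · obtain ⟨y₁, hy₁ | hy₁⟩ := hcomp
        · exact Or.inl fun y => ⟨cover_le_all hflow hmin hcone hmono h1 h2 hy₁ y, hneq y⟩
        · exact Or.inr fun y =>
            ⟨cover_le_all hflow hmin hcone hmono h2 h1 hy₁ y, fun h => hneq y h.symm⟩
      · push_neg at hcomp
        obtain ⟨y₀⟩ := hY
        exact (no_incomparable hflow hcone hsp hsop hglb horb h1 h2 y₀ hcomp).elim
    · exact absurd (funext fun y => absurd ⟨y⟩ hY) hne
  refine ⟨hpart1, ?_⟩
  rintro y a ⟨ca, hca, rfl⟩ b ⟨cb, hcb, rfl⟩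
  by_cases hcc : ca = cb
  · left
    show cb y - ca y ∈ Xp
    rw [hcc, sub_self]
    exact hcone.zero_mem
  · rcases hpart1 ca cb hca hcb hcc with h | h
    · exact Or.inl (h y).1
    · exact Or.inr (h y).1
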